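/- Let Y be a two-state Markov chain on {0,1} with transition probabilities a (0→1), b (1→0), with λ ≤ a+b ≤ 1. Let S = (1/k) Σ_{ℓ=k+1}^{2k} Y(ℓ). Then |E[S] − a/(a+b)| ≤ (1/k) · (1−λ)^{k+1} / λ. -/

import Mathlib

open MeasureTheory Finset

theorem stmt_7_aux_geom {x : ℝ} (h0 : 0 ≤ x) (h1 : x < 1) (k : ℕ) :
    ∑ j ∈ Finset.range k, x ^ j ≤ 1 / (1 - x) := by
  have hx1 : x ≠ 1 := ne_of_lt h1
  have h1x : 0 < 1 - x := by linarith
  have heq : (x ^ k - 1) / (x - 1) = (1 - x ^ k) / (1 - x) := by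
    rw [← neg_div_neg_eq]; ring_nf
  rw [geom_sum_eq hx1, heq, div_le_div_iff₀ h1x h1x]
  nlinarith [pow_nonneg h0 k]

/-- For a two-state Markov chain Y on {0,1} with transition
probabilities a (0→1), b (1→0), with λ ≤ a+b ≤ 1 and λ > 0, and arbitrary initial
distribution, the empirical average S = (1/k) Σ_{ℓ=k+1}^{2k} Y(ℓ) satisfies
|E[S] − a/(a+b)| ≤ (1/k)·(1−λ)^{k+1}/λ. -/
theorem stmt_7 {Ω : Type*} [MeasurableSpace Ω] (μ : Measure Ω) [IsProbabilityMeasure μ]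
    (a b lam : ℝ) (ha : 0 ≤ a) (hb : 0 ≤ b) (hab1 : a + b ≤ 1)
    (hlam : 0 < lam) (hab : lam ≤ a + b)
    (k : ℕ) (hk : 0 < k)
    (Y : ℕ → Ω → Bool) (hYmeas : ∀ ℓ, Measurable (Y ℓ))
    (h01 : ∀ ℓ, (μ ({ω | Y (ℓ + 1) ω = true} ∩ {ω | Y ℓ ω = false})).toReal
      = a * (μ {ω | Y ℓ ω = false}).toReal)
    (h10 : ∀ ℓ, (μ ({ω | Y (ℓ + 1) ω = false} ∩ {ω | Y ℓ ω = true})).toReal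
      = b * (μ {ω | Y ℓ ω = true}).toReal) :
    |(1 / (k : ℝ)) * (∑ ℓ ∈ Finset.Icc (k + 1) (2 * k), (μ {ω | Y ℓ ω = true}).toReal)
        - a / (a + b)|
      ≤ (1 / (k : ℝ)) * (1 - lam) ^ (k + 1) / lam := by
  set p : ℕ → ℝ := fun ℓ => (μ {ω | Y ℓ ω = true}).toReal with hp
  have hc : 0 < a + b := lt_of_lt_of_le hlam hab
  set π : ℝ := a / (a + b) with hπ
  have hmeasT : ∀ ℓ, MeasurableSet {ω | Y ℓ ω = true} :=
    fun ℓ => hYmeas ℓ (measurableSet_singleton true)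
  have hcomp : ∀ ℓ, {ω | Y ℓ ω = false} = {ω | Y ℓ ω = true}ᶜ := by
    intro ℓ; ext ω; cases hy : Y ℓ ω <;> simp [hy]
  -- p false = 1 - p true
  have hfalse : ∀ ℓ, (μ {ω | Y ℓ ω = false}).toReal = 1 - p ℓ := by
    intro ℓ
    rw [hcomp ℓ, measure_compl (hmeasT ℓ) (measure_ne_top μ _), measure_univ,
      ENNReal.toReal_sub_of_le prob_le_one (by simp)]
    simp [hp]
  have hsplit : ∀ (s t : Set Ω), MeasurableSet t →
      (μ s).toReal = (μ (s ∩ t)).toReal + (μ (s \ t)).toReal := by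
    intro s t ht
    rw [← ENNReal.toReal_add (measure_ne_top μ _) (measure_ne_top μ _),
      measure_inter_add_diff s ht]
  -- recursion
  have hrec : ∀ ℓ, p (ℓ + 1) = a + (1 - a - b) * p ℓ := by
    intro ℓ
    have hd1 : {ω | Y (ℓ+1) ω = true} \ {ω | Y ℓ ω = true}
        = {ω | Y (ℓ+1) ω = true} ∩ {ω | Y ℓ ω = false} := by
      rw [hcomp ℓ]; rfl
    have e1 : p (ℓ+1) = (μ ({ω | Y (ℓ+1) ω = true} ∩ {ω | Y ℓ ω = true})).toReal
        + a * (1 - p ℓ) := by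
      have h := hsplit {ω | Y (ℓ+1) ω = true} {ω | Y ℓ ω = true} (hmeasT ℓ)
      rw [hd1, h01 ℓ, hfalse ℓ] at h
      exact h
    have hd2 : {ω | Y ℓ ω = true} \ {ω | Y (ℓ+1) ω = true}
        = {ω | Y (ℓ+1) ω = false} ∩ {ω | Y ℓ ω = true} := by
      rw [hcomp (ℓ+1)]; ext ω; simp [Set.mem_diff]; tauto
    have e2 : p ℓ = (μ ({ω | Y ℓ ω = true} ∩ {ω | Y (ℓ+1) ω = true})).toReal
        + b * p ℓ := by
      have h := hsplit {ω | Y ℓ ω = true} {ω | Y (ℓ+1) ω = true} (hmeasT (ℓ+1))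
      rw [hd2, h10 ℓ] at h
      exact h
    have hcm : ({ω | Y ℓ ω = true} ∩ {ω | Y (ℓ+1) ω = true})
        = ({ω | Y (ℓ+1) ω = true} ∩ {ω | Y ℓ ω = true}) := Set.inter_comm _ _
    rw [hcm] at e2
    have : (μ ({ω | Y (ℓ+1) ω = true} ∩ {ω | Y ℓ ω = true})).toReal = p ℓ - b * p ℓ := by
      linarith
    rw [e1, this]; ring
  -- contraction bound
  have hr0 : 0 ≤ 1 - a - b := by linarith
  have hrl : 1 - a - b ≤ 1 - lam := by linarith
  have hl1 : 0 ≤ 1 - lam := by linarith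
  have hπ0 : 0 ≤ π := div_nonneg ha (le_of_lt hc)
  have hπ1 : π ≤ 1 := by
    rw [hπ, div_le_one hc]; linarith
  have hp0 : ∀ ℓ, 0 ≤ p ℓ := fun ℓ => ENNReal.toReal_nonneg
  have hp1 : ∀ ℓ, p ℓ ≤ 1 := by
    intro ℓ
    have h := ENNReal.toReal_mono ENNReal.one_ne_top
      (prob_le_one : μ {ω | Y ℓ ω = true} ≤ 1)
    simpa using h
  have hstep : ∀ ℓ, p (ℓ + 1) - π = (1 - a - b) * (p ℓ - π) := by
    intro ℓ
    rw [hrec ℓ]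
    have hfix : a + (1 - a - b) * π = π := by
      rw [hπ]; field_simp; ring
    linear_combination hfix
  have hbound : ∀ ℓ, |p ℓ - π| ≤ (1 - lam) ^ ℓ := by
    intro ℓ
    induction ℓ with
    | zero =>
      simp only [pow_zero]
      rw [abs_le]; constructor <;> nlinarith [hp0 0, hp1 0]
    | succ n ih =>
      rw [hstep n, abs_mul, pow_succ, abs_of_nonneg hr0, mul_comm ((1-lam)^n)]
      exact mul_le_mul hrl ih (abs_nonneg _) hl1
  -- sum bound
  have hcard : (Finset.Icc (k + 1) (2 * k)).card = k := by
    rw [Nat.card_Icc]; omega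
  have hksum : |∑ ℓ ∈ Finset.Icc (k + 1) (2 * k), (p ℓ - π)|
      ≤ (1 - lam) ^ (k + 1) / lam := by
    calc |∑ ℓ ∈ Finset.Icc (k + 1) (2 * k), (p ℓ - π)|
        ≤ ∑ ℓ ∈ Finset.Icc (k + 1) (2 * k), |p ℓ - π| := abs_sum_le_sum_abs _ _
      _ ≤ ∑ ℓ ∈ Finset.Icc (k + 1) (2 * k), (1 - lam) ^ ℓ :=
          Finset.sum_le_sum fun ℓ _ => hbound ℓ
      _ = ∑ j ∈ Finset.range k, (1 - lam) ^ (k + 1 + j) := by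
          rw [← Finset.Ico_add_one_right_eq_Icc, Finset.sum_Ico_eq_sum_range,
            show 2 * k + 1 - (k + 1) = k from by omega]
      _ = (1 - lam) ^ (k + 1) * ∑ j ∈ Finset.range k, (1 - lam) ^ j := by
          rw [Finset.mul_sum]
          exact Finset.sum_congr rfl fun j _ => by rw [pow_add]
      _ ≤ (1 - lam) ^ (k + 1) * (1 / (1 - (1 - lam))) := by
          apply mul_le_mul_of_nonneg_left _ (pow_nonneg hl1 _)
          exact stmt_7_aux_geom hl1 (by linarith) k
      _ = (1 - lam) ^ (k + 1) / lam := by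
          rw [show (1 - (1 - lam)) = lam by ring]; ring
  have hkr : (0 : ℝ) < (k : ℝ) := Nat.cast_pos.2 hk
  have key : (1 / (k : ℝ)) * (∑ ℓ ∈ Finset.Icc (k + 1) (2 * k), p ℓ) - π
      = (1 / (k : ℝ)) * ∑ ℓ ∈ Finset.Icc (k + 1) (2 * k), (p ℓ - π) := by
    rw [Finset.sum_sub_distrib, Finset.sum_const, hcard, nsmul_eq_mul]
    field_simp
  rw [key, abs_mul, abs_of_nonneg (by positivity : (0:ℝ) ≤ 1 / (k:ℝ)),
    mul_div_assoc]
  exact mul_le_mul_of_nonneg_left hksum (by positivity)
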